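/- For all x ≥ 0 and α ≥ 1/√6, log Γ(α + x) ≤ x·log(x) − x + ((2α−1)/2)·log(α + x) + (1/2)·log(2π), with the convention 0·log 0 = 0. -/

import Mathlib

open Real
open Filter Stirling Topology

lemma aux_series (y : ℝ) (h0 : 0 ≤ y) (h1 : y < 1) :
    Real.log (1 + y) - Real.log (1 - y) ≤ 2*y + (2/3)*y^3 * (1/(1 - y^2)) := by
  have hy1 : |y| < 1 := abs_lt.mpr ⟨by linarith, h1⟩
  have hy2 : y^2 < 1 := by nlinarith
  have hS := Real.hasSum_log_sub_log_of_abs_lt_one hy1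
  set L := Real.log (1 + y) - Real.log (1 - y) with hL
  have e : (L - 2*y) + ∑ i ∈ Finset.range 1,
      ((2:ℝ) * (1 / (2 * (i:ℝ) + 1)) * y ^ (2 * i + 1)) = L := by
    simp
  rw [← e] at hS
  have h1' := (hasSum_nat_add_iff 1).mpr hS
  have hg : HasSum (fun n : ℕ => (2/3)*y^3*(y^2)^n) ((2/3)*y^3*(1/(1 - y^2))) := by
    simpa [div_eq_mul_inv, one_div] using
      (hasSum_geometric_of_lt_one (sq_nonneg y) hy2).mul_left ((2/3)*y^3)
  have hle : L - 2*y ≤ (2/3)*y^3*(1/(1 - y^2)) := by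
    refine hasSum_le (fun n => ?_) h1' hg
    have hp : y ^ (2*(n+1)+1) = y^3 * (y^2)^n := by ring
    have hyp : (0:ℝ) ≤ y ^ 3 * (y^2)^n := by positivity
    have hc : (2:ℝ) * (1 / (2 * ((n:ℝ)+1) + 1)) ≤ 2/3 := by
      have hn : (0:ℝ) ≤ (n:ℝ) := Nat.cast_nonneg n
      rw [mul_one_div, div_le_div_iff₀ (by linarith) (by norm_num)]
      linarith
    calc (2:ℝ) * (1 / (2 * (↑(n+1):ℝ) + 1)) * y ^ (2 * (n+1) + 1)
        = (2 * (1 / (2 * ((n:ℝ)+1) + 1))) * (y^3 * (y^2)^n) := by push_cast; rw [hp]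
      _ ≤ (2/3) * (y^3 * (y^2)^n) := mul_le_mul_of_nonneg_right hc hyp
      _ = (2/3)*y^3*(y^2)^n := by ring
  linarith

lemma aux_K (s : ℝ) (hs : 0 < s) :
    (s + 1/2) * (Real.log (s+1) - Real.log s) ≤ 1 + 1/(12*s*(s+1)) := by
  set y : ℝ := 1/(2*s+1) with hy
  have hy0 : 0 ≤ y := by positivity
  have hy1 : y < 1 := by
    rw [hy, div_lt_one (by linarith)]; linarith
  have h2s : (2*s+1) ≠ 0 := by positivity
  have e1 : (1:ℝ) + y = (s+1)/(s+1/2) := by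
    rw [hy]; field_simp; ring
  have e2 : (1:ℝ) - y = s/(s+1/2) := by
    rw [hy]; field_simp; ring
  have hd : Real.log (1+y) - Real.log (1-y) = Real.log (s+1) - Real.log s := by
    rw [e1, e2, Real.log_div (by linarith) (by positivity), Real.log_div hs.ne' (by positivity)]
    ring
  have hb := aux_series y hy0 hy1
  rw [hd] at hb
  have key : (s + 1/2) * (2*y + (2/3)*y^3 * (1/(1 - y^2))) = 1 + 1/(12*s*(s+1)) := by
    rw [hy]
    have h1 : (1:ℝ) - (1/(2*s+1))^2 = (4*s*(s+1))/((2*s+1)^2) := by field_simp; ring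
    rw [h1]
    field_simp
    ring
  calc (s + 1/2) * (Real.log (s+1) - Real.log s)
      ≤ (s + 1/2) * (2*y + (2/3)*y^3 * (1/(1 - y^2))) :=
        mul_le_mul_of_nonneg_left hb (by linarith)
    _ = 1 + 1/(12*s*(s+1)) := key

lemma aux_L2 (t : ℝ) (ht : 0 < t) :
    Real.log (1 + t) ≤ t - t^2/(2*(1+t)) := by
  set y : ℝ := t/(t+2) with hy
  have hy0 : 0 ≤ y := by positivity
  have hy1 : y < 1 := by rw [hy, div_lt_one (by linarith)]; linarith
  have e1 : (1:ℝ) + y = (2*t+2)/(t+2) := by rw [hy]; field_simp; ring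
  have e2 : (1:ℝ) - y = 2/(t+2) := by rw [hy]; field_simp; ring
  have hd : Real.log (1+y) - Real.log (1-y) = Real.log (1+t) := by
    rw [e1, e2, Real.log_div (by linarith) (by positivity), Real.log_div (by norm_num) (by positivity)]
    have : Real.log (2*t+2) = Real.log 2 + Real.log (t+1) := by
      rw [show (2*t+2 : ℝ) = 2*(t+1) by ring, Real.log_mul (by norm_num) (by linarith)]
    rw [this]
    have e3 : (1:ℝ) + t = t + 1 := by ring
    rw [e3]
    ring
  have hb := aux_series y hy0 hy1
  rw [hd] at hb
  have key : 2*y + (2/3)*y^3 * (1/(1 - y^2)) ≤ t - t^2/(2*(1+t)) := by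
    have h1 : (1:ℝ) - y^2 = (4*(t+1))/((t+2)^2) := by rw [hy]; field_simp; ring
    rw [hy, h1, ← sub_nonneg]
    have h2 : (0:ℝ) < t + 1 := by linarith
    have h3 : (0:ℝ) < t + 2 := by linarith
    field_simp
    nlinarith [pow_pos ht 3, pow_pos ht 4, pow_pos ht 5, sq_nonneg t, mul_pos ht h2]
  linarith

noncomputable def auxH (s : ℝ) : ℝ := Real.log (Real.Gamma s) - (s - 1/2) * Real.log s + s

lemma auxH_step (s : ℝ) (hs : 0 < s) :
    auxH s ≤ auxH (s+1) + (1/(12*s) - 1/(12*(s+1))) := by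
  have hG : Real.log (Real.Gamma (s+1)) = Real.log s + Real.log (Real.Gamma s) := by
    rw [Real.Gamma_add_one hs.ne', Real.log_mul hs.ne' (Real.Gamma_pos_of_pos hs).ne']
  have hK := aux_K s hs
  have he : 1/(12*s) - 1/(12*(s+1)) = 1/(12*s*(s+1)) := by
    field_simp
    ring
  unfold auxH
  rw [hG, he]
  nlinarith [hK]

lemma auxH_tele (s : ℝ) (hs : 0 < s) (n : ℕ) :
    auxH s ≤ auxH (s+n) + 1/(12*s) := by
  have key : ∀ m : ℕ, auxH s ≤ auxH (s+m) + (1/(12*s) - 1/(12*(s+m))) := by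
    intro m
    induction m with
    | zero => simp
    | succ k ih =>
      have hsk : (0:ℝ) < s + k := by positivity
      have h2 := auxH_step (s+k) hsk
      have he : s + (k:ℝ) + 1 = s + (↑(k+1):ℝ) := by push_cast; ring
      rw [he] at h2
      calc auxH s ≤ auxH (s+k) + (1/(12*s) - 1/(12*(s+k))) := ih
        _ ≤ auxH (s+(k+1:ℕ)) + (1/(12*(s+k)) - 1/(12*(s+(k+1:ℕ)))) +
            (1/(12*s) - 1/(12*(s+k))) := by push_cast at h2 ⊢; linarith
        _ = auxH (s+(k+1:ℕ)) + (1/(12*s) - 1/(12*(s+(k+1:ℕ)))) := by ring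
  have h := key n
  have : (0:ℝ) < 12*(s+n) := by positivity
  have : 0 ≤ 1/(12*(s+(n:ℝ))) := by positivity
  linarith

lemma auxH_nat (j : ℕ) : auxH (↑(j+1) : ℝ) = Real.log (stirlingSeq (j+1)) + (1/2)*Real.log 2 := by
  have hf := log_stirlingSeq_formula (j+1)
  have hj : (0:ℝ) < (↑(j+1):ℝ) := by positivity
  have hG : Real.Gamma (↑(j+1):ℝ) = (Nat.factorial j : ℝ) := by
    push_cast
    exact_mod_cast Real.Gamma_nat_eq_factorial j
  have hfac : Real.log ((Nat.factorial (j+1) : ℝ)) =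
      Real.log (↑(j+1):ℝ) + Real.log ((Nat.factorial j : ℝ)) := by
    rw [Nat.factorial_succ]
    push_cast
    rw [Real.log_mul (by positivity) (by positivity)]
  have h2 : Real.log (2*(↑(j+1):ℝ)) = Real.log 2 + Real.log (↑(j+1):ℝ) :=
    Real.log_mul (by norm_num) hj.ne'
  have h3 : Real.log ((↑(j+1):ℝ)/Real.exp 1) = Real.log (↑(j+1):ℝ) - 1 := by
    rw [Real.log_div hj.ne' (Real.exp_pos 1).ne', Real.log_exp]
  unfold auxH
  rw [hG]
  rw [hfac, h2, h3] at hf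
  push_cast at hf ⊢
  linarith [hf]

lemma aux_convex (k : ℕ) (hk : 1 ≤ k) (θ : ℝ) (h0 : 0 ≤ θ) (h1 : θ ≤ 1) :
    Real.log (Real.Gamma ((k:ℝ) + θ)) ≤ Real.log (Real.Gamma k) + θ * Real.log k := by
  have hkR : (0:ℝ) < (k:ℝ) := by exact_mod_cast hk
  have hmem1 : (k:ℝ) ∈ Set.Ioi (0:ℝ) := hkR
  have hmem2 : ((k:ℝ)+1) ∈ Set.Ioi (0:ℝ) := by simp; linarith
  have hc := Real.convexOn_log_Gamma.2 hmem1 hmem2 (by linarith : (0:ℝ) ≤ 1 - θ) h0 (by ring)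
  have hpt : (1-θ) • (k:ℝ) + θ • ((k:ℝ)+1) = (k:ℝ) + θ := by
    simp [smul_eq_mul]; ring
  rw [hpt] at hc
  have hG1 : Real.Gamma ((k:ℝ)+1) = (k:ℝ) * Real.Gamma k := Real.Gamma_add_one hkR.ne'
  have h2 : Real.log (Real.Gamma ((k:ℝ)+1)) = Real.log k + Real.log (Real.Gamma k) := by
    rw [hG1, Real.log_mul hkR.ne' (Real.Gamma_pos_of_pos hkR).ne']
  simp only [Function.comp_apply, smul_eq_mul] at hc
  rw [h2] at hc
  nlinarith [hc]



lemma auxH_le (s : ℝ) (hs : 0 < s) : auxH s ≤ (1/2)*Real.log (2*π) + 1/(12*s) := by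
  set m : ℕ := ⌊s⌋₊ with hm
  set θ : ℝ := s - m with hθ
  have hθ0 : 0 ≤ θ := by
    have := Nat.floor_le hs.le
    simpa [hθ] using this
  have hθ1 : θ < 1 := by
    have := Nat.lt_floor_add_one s
    simp only [hθ]
    linarith
  clear_value m θ
  -- the bounding sequence
  have key : ∀ n : ℕ, auxH s ≤
      Real.log (stirlingSeq (n + m + 1)) + (1/2)*Real.log 2
        + 1/(2*((n:ℝ) + m + 1)) + 1/(12*s) := by
    intro n
    set k : ℕ := n + m + 1 with hk
    have hk1 : 1 ≤ k := by omega
    have hkR : (1:ℝ) ≤ (k:ℝ) := by exact_mod_cast hk1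
    have hkpos : (0:ℝ) < (k:ℝ) := by linarith
    have hsn : s + ((n+1:ℕ):ℝ) = (k:ℝ) + θ := by
      simp only [hθ, hk]
      push_cast
      ring
    have h1 := auxH_tele s hs (n+1)
    rw [hsn] at h1
    -- bound auxH (k + θ)
    have hlog : Real.log (k:ℝ) + θ/((k:ℝ)+θ) ≤ Real.log ((k:ℝ)+θ) := by
      have hq : (0:ℝ) < (k:ℝ)+θ := by linarith
      have := Real.log_le_sub_one_of_pos (show (0:ℝ) < (k:ℝ)/((k:ℝ)+θ) by positivity)
      rw [Real.log_div hkpos.ne' hq.ne'] at this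
      have he : (k:ℝ)/((k:ℝ)+θ) - 1 = -(θ/((k:ℝ)+θ)) := by field_simp; ring
      rw [he] at this
      linarith
    have hcv := aux_convex k hk1 θ hθ0 hθ1.le
    have hcoef : (0:ℝ) < (k:ℝ) + θ - 1/2 := by linarith
    have hmul : ((k:ℝ) + θ - 1/2) * (Real.log (k:ℝ) + θ/((k:ℝ)+θ)) ≤
        ((k:ℝ) + θ - 1/2) * Real.log ((k:ℝ)+θ) :=
      mul_le_mul_of_nonneg_left hlog hcoef.le
    have h2' : auxH ((k:ℝ)+θ) ≤ auxH (k:ℝ) + (θ - ((k:ℝ) + θ - 1/2) * (θ/((k:ℝ)+θ))) := by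
      unfold auxH
      nlinarith [hmul, hcv]
    have hq : (0:ℝ) < (k:ℝ)+θ := by linarith
    have hrem : θ - ((k:ℝ) + θ - 1/2) * (θ/((k:ℝ)+θ)) = θ/(2*((k:ℝ)+θ)) := by
      field_simp
      ring
    rw [hrem] at h2'
    have h3 : θ/(2*((k:ℝ)+θ)) ≤ 1/(2*(k:ℝ)) := by
      rw [div_le_div_iff₀ (by linarith) (by linarith)]
      nlinarith
    have h4 : auxH (k:ℝ) = Real.log (stirlingSeq k) + (1/2)*Real.log 2 := by
      have := auxH_nat (n+m)
      have e : n + m + 1 = k := by omega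
      rw [e] at this
      exact this
    rw [h4] at h2'
    have hkcast : ((k:ℝ)) = (n:ℝ) + m + 1 := by simp [hk]
    rw [hkcast] at h1 h2' h3
    linarith [h1, h2', h3]
  -- take the limit
  have hlim : Tendsto (fun n : ℕ => Real.log (stirlingSeq (n + m + 1)) + (1/2)*Real.log 2
        + 1/(2*((n:ℝ) + m + 1)) + 1/(12*s)) atTop
      (𝓝 ((1/2)*Real.log π + (1/2)*Real.log 2 + 0 + 1/(12*s))) := by
    have t1 : Tendsto (fun n : ℕ => stirlingSeq (n + m + 1)) atTop (𝓝 (Real.sqrt π)) :=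
      tendsto_stirlingSeq_sqrt_pi.comp (tendsto_add_atTop_nat (m+1))
    have t2 : Tendsto (fun n : ℕ => Real.log (stirlingSeq (n + m + 1))) atTop
        (𝓝 ((1/2)*Real.log π)) := by
      have hπ : Real.sqrt π ≠ 0 := by positivity
      have := t1.log hπ
      rwa [Real.log_sqrt Real.pi_pos.le, show Real.log π / 2 = (1/2)*Real.log π by ring] at this
    have t3 : Tendsto (fun n : ℕ => 1/(2*((n:ℝ) + m + 1))) atTop (𝓝 0) := by
      have ha : Tendsto (fun n : ℕ => 2*((n:ℝ) + m + 1)) atTop atTop := by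
        apply Tendsto.const_mul_atTop (by norm_num : (0:ℝ) < 2)
        have hb : Tendsto (fun n : ℕ => (n:ℝ)) atTop atTop := tendsto_natCast_atTop_atTop
        have hc := tendsto_atTop_add_const_right atTop ((m:ℝ)) hb
        exact tendsto_atTop_add_const_right atTop 1 hc
      have hi := ha.inv_tendsto_atTop
      have he : (fun n : ℕ => 2*((n:ℝ) + m + 1))⁻¹ = fun n : ℕ => 1/(2*((n:ℝ) + m + 1)) := by
        funext j
        simp
      rwa [he] at hi
    exact ((t2.add tendsto_const_nhds).add t3).add tendsto_const_nhds
  have := ge_of_tendsto' hlim key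
  have hπ2 : (1/2)*Real.log π + (1/2)*Real.log 2 + 0 + 1/(12*s)
      = (1/2)*Real.log (2*π) + 1/(12*s) := by
    rw [Real.log_mul (by norm_num) Real.pi_ne_zero]
    ring
  linarith [this, hπ2.le, hπ2.ge]



lemma main_bound (s : ℝ) (hs : 0 < s) :
    Real.log (Real.Gamma s) ≤ (s - 1/2)*Real.log s - s + (1/2)*Real.log (2*π) + 1/(12*s) := by
  have := auxH_le s hs
  unfold auxH at this
  linarith

theorem stmt_2 (x α : ℝ) (hx : 0 ≤ x) (hα : 1 / Real.sqrt 6 ≤ α) :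
    Real.log (Real.Gamma (α + x)) ≤
      x * Real.log x - x + ((2 * α - 1) / 2) * Real.log (α + x) + (1/2) * Real.log (2 * π) := by
  have h6 : (0:ℝ) < Real.sqrt 6 := Real.sqrt_pos.mpr (by norm_num)
  have hα0 : 0 < α := lt_of_lt_of_le (by positivity) hα
  have hα2 : 1/6 ≤ α^2 := by
    have h1 : (1/Real.sqrt 6)^2 ≤ α^2 := by
      apply pow_le_pow_left₀ (by positivity) hα _
    have h2 : (1/Real.sqrt 6)^2 = 1/6 := by
      rw [div_pow, one_pow, Real.sq_sqrt (by norm_num : (0:ℝ) ≤ 6)]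
    linarith
  have hs : 0 < α + x := by linarith
  have hM := main_bound (α + x) hs
  have hkey : x * Real.log (α + x) - x * Real.log x + 1/(12*(α+x)) ≤ α := by
    rcases eq_or_lt_of_le hx with h | hxpos
    · subst h
      simp only [zero_mul, sub_zero, add_zero, zero_sub, neg_zero, zero_add]
      have : 1/(12*α) ≤ α := by
        rw [div_le_iff₀ (by positivity)]
        nlinarith
      linarith
    · -- x > 0
      have ht : 0 < α / x := by positivity
      have hL := aux_L2 (α/x) ht
      have he : (1:ℝ) + α/x = (α+x)/x := by field_simp; ring
      have hlog : Real.log (α + x) - Real.log x = Real.log (1 + α/x) := by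
        rw [he, Real.log_div hs.ne' (ne_of_gt hxpos)]
      have he2 : (α/x) - (α/x)^2/(2*(1+α/x)) = α/x - α^2/(2*x*(α+x)) := by
        rw [he]
        field_simp
      rw [he2] at hL
      have hmul : x * (Real.log (α+x) - Real.log x) ≤ x * (α/x - α^2/(2*x*(α+x))) := by
        rw [hlog]
        exact mul_le_mul_of_nonneg_left hL hx
      have he3 : x * (α/x - α^2/(2*x*(α+x))) = α - α^2/(2*(α+x)) := by
        field_simp
      rw [he3] at hmul
      have hfin : 1/(12*(α+x)) ≤ α^2/(2*(α+x)) := by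
        rw [div_le_div_iff₀ (by positivity) (by positivity)]
        nlinarith
      nlinarith [hmul, hfin]
  -- combine
  have harith : (α + x - 1/2) * Real.log (α+x) =
      ((2*α-1)/2) * Real.log (α+x) + x * Real.log (α+x) := by ring
  nlinarith [hM, hkey]
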